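/- Let p = g∘f and suppose w ∈ ∂W_j with Re w ≥ 0, where 2^{-j} ≤ ε and the rectangle I₁ = {x+iy : 1/4 ≤ x ≤ 1, 0 ≤ y ≤ ε} together with the triangle I₂ = {x+iy : y < x ≤ 1/4, 0 ≤ y ≤ ε} is contained in the escaping set I(p). Then for all sufficiently small η > 0, the point w + η belongs to I(p); consequently w ∈ ∂I(p) (since w itself lies on the boundary of the non-escaping diamond W̄_j). -/

import Mathlib

open Set Complex Filter

/-- The slice function `h_y`. -/
noncomputable def hy (y x : ℝ) : ℝ :=
  if |x| + |y - 3/4| < 1/4 then 1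
  else if y ≤ |x| then 4
  else if y ≤ 3/4 then 6 * |x| - 6 * y + 4
  else (3 * |x| + 5 * y - 4) / (2 * y - 1)

/-- The map `h(x + iy) = h_y(x)·x + iy`. -/
noncomputable def hmap (z : ℂ) : ℂ := ⟨hy z.im z.re * z.re, z.im⟩

/-- For `y > 0`, the unique integer `m` with `2^{-(m+1)} < y ≤ 2^{-m}`. -/
noncomputable def mval (y : ℝ) : ℤ := ⌊Real.logb 2 y⁻¹⌋

/-- The map `f`: equal to `2^{-(m+1)} h(2^m z)` when `Im z ∈ (2^{-(m+1)}, 2^{-m}]`,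
and to `2x + iy/2` when `Im z ≤ 0`. -/
noncomputable def f (z : ℂ) : ℂ :=
  if z.im ≤ 0 then ⟨2 * z.re, z.im / 2⟩
  else (2 : ℂ) ^ (-(mval z.im + 1)) * hmap ((2 : ℂ) ^ (mval z.im) * z)

/-- The open diamond `W₀` with vertices `i`, `i/2`, `(3i+1)/4`, `(3i-1)/4`. -/
def W0 : Set ℂ := {z : ℂ | |z.re| + |z.im - 3/4| < 1/4}

/-- The scaled diamonds `W_k = 2^{-k} W₀`. -/
def W (k : ℕ) : Set ℂ := (fun z : ℂ => (2 : ℂ) ^ (-(k : ℤ)) * z) '' W0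

/-- The map `g`. -/
noncomputable def g (δ : ℝ) (d : ℕ) (z : ℂ) : ℂ :=
  if ‖z‖ ≤ 1 then z
  else if ‖z‖ ≤ 2 then z + δ * (‖z‖ - 1) * z ^ d
  else z + δ * z ^ d

/-- The polynomial-type quasiregular map `p = g ∘ f`. -/
noncomputable def p (δ : ℝ) (d : ℕ) : ℂ → ℂ := g δ d ∘ f

/-- The escaping set. -/
def escapingSet (q : ℂ → ℂ) : Set ℂ :=
  {z : ℂ | Tendsto (fun n : ℕ => ‖q^[n] z‖) atTop atTop}

/-- The rectangle `I₁`. -/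
def I1 (ε : ℝ) : Set ℂ := {z : ℂ | 1/4 ≤ z.re ∧ z.re ≤ 1 ∧ 0 ≤ z.im ∧ z.im ≤ ε}

/-- The triangle `I₂`. -/
def I2 (ε : ℝ) : Set ℂ := {z : ℂ | z.im < z.re ∧ z.re ≤ 1/4 ∧ 0 ≤ z.im ∧ z.im ≤ ε}

open Set Complex Filter
lemma mval_eq {t:ℝ} {m : ℤ} (h1 : (2:ℝ)^(-(m+1)) < t) (h2 : t ≤ (2:ℝ)^(-m)) : mval t = m := by
  have ht : 0 < t := lt_trans (by positivity) h1
  have hti : 0 < t⁻¹ := by positivity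
  have h2' : (2:ℝ)^(m:ℤ) ≤ t⁻¹ := by
    rw [le_inv_comm₀ (by positivity) ht, ← zpow_neg]; exact h2
  have h1' : t⁻¹ < (2:ℝ)^(m+1:ℤ) := by
    rw [inv_lt_comm₀ ht (by positivity), ← zpow_neg]; exact h1
  unfold mval
  rw [Int.floor_eq_iff]
  constructor
  · rw [Real.le_logb_iff_rpow_le (by norm_num) hti, Real.rpow_intCast]; exact h2'
  · rw [Real.logb_lt_iff_lt_rpow (by norm_num) hti]
    have : ((m:ℝ) + 1) = ((m+1 : ℤ) : ℝ) := by push_cast; ring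
    rw [this, Real.rpow_intCast]; exact h1'
open Set Complex Filter

lemma hy_of_mem {y x : ℝ} (h : |x| + |y - 3/4| < 1/4) : hy y x = 1 := if_pos h

lemma hy_of_ge {y x : ℝ} (h05 : 1/2 < y) (hxy : y ≤ x) (hx : 0 < x) : hy y x = 4 := by
  have hax : |x| = x := abs_of_pos hx
  unfold hy; rw [hax]
  rw [if_neg (by intro h; nlinarith [abs_nonneg (y - 3/4)]), if_pos hxy]

lemma hy_ge_one {y x : ℝ} (h05 : 1/2 < y) (h1 : y ≤ 1) (hx : 0 < x)
    (hout : 1/4 < x + |y - 3/4|) : 1 ≤ hy y x := by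
  have hax : |x| = x := abs_of_pos hx
  unfold hy; rw [hax]
  split_ifs with hA hB hC
  · norm_num
  · norm_num
  · rcases abs_cases (y - 3/4) with ⟨he, _⟩ | ⟨he, _⟩ <;> rw [he] at hout <;> nlinarith
  · push_neg at hC
    have hd : 0 < 2*y - 1 := by linarith
    rw [le_div_iff₀ hd]
    rcases abs_cases (y - 3/4) with ⟨he, hy0⟩ | ⟨he, _⟩
    · rw [he] at hout; nlinarith
    · nlinarith

lemma hy_le_four {y x : ℝ} (hx : 0 ≤ x) : hy y x ≤ 4 := by
  have hax : |x| = x := abs_of_nonneg hx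
  unfold hy; rw [hax]
  split_ifs with hA hB hC
  · norm_num
  · norm_num
  · push_neg at hB; linarith
  · push_neg at hB hC
    have hd : 0 < 2*y - 1 := by linarith
    rw [div_le_iff₀ hd]; nlinarith

lemma hy_gap {y x : ℝ} (h05 : 1/2 < y) (h1 : y ≤ 1) (hx : 0 < x)
    (hout : 1/4 < x + |y - 3/4|) (hxy : x < y) :
    (x - (1/4 - |y - 3/4|)) * (1 + 3*x) ≤ hy y x * x - (1/4 - |y - 3/4|) := by
  have hax : |x| = x := abs_of_pos hx
  unfold hy; rw [hax]
  split_ifs with hA hB hC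
  · linarith
  · linarith
  · have he : |y - 3/4| = -(y - 3/4) := abs_of_nonpos (by linarith)
    rw [he]; nlinarith
  · push_neg at hC
    have he : |y - 3/4| = y - 3/4 := abs_of_nonneg (by linarith)
    have hd : 0 < 2*y - 1 := by linarith
    rw [he, div_mul_eq_mul_div, le_sub_iff_add_le, le_div_iff₀ hd]
    have hs : 0 ≤ x - (1 - y) := by rw [he] at hout; linarith
    nlinarith [mul_nonneg (mul_nonneg hs hx.le) (show (0:ℝ) ≤ 2 - 2*y by linarith)]
lemma two_zpow_c (k : ℤ) : ((2:ℂ)^k) = (((2:ℝ)^k : ℝ) : ℂ) := by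
  rw [Complex.ofReal_zpow]; norm_num

lemma f_eq (z : ℂ) (m : ℤ) (h1 : (2:ℝ)^(-(m+1)) < z.im) (h2 : z.im ≤ (2:ℝ)^(-m)) :
    f z = ⟨(2:ℝ)^(-(m+1)) * (hy ((2:ℝ)^m * z.im) ((2:ℝ)^m * z.re) * ((2:ℝ)^m * z.re)),
           z.im / 2⟩ := by
  have him : 0 < z.im := lt_trans (by positivity) h1
  have hm : mval z.im = m := mval_eq h1 h2
  unfold f
  rw [if_neg (by linarith), hm, two_zpow_c m, two_zpow_c (-(m+1))]
  unfold hmap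
  rw [Complex.re_ofReal_mul, Complex.im_ofReal_mul]
  apply Complex.ext
  · exact Complex.re_ofReal_mul _ _
  · rw [Complex.im_ofReal_mul]
    show (2:ℝ)^(-(m+1)) * ((2:ℝ)^m * z.im) = z.im / 2
    rw [← mul_assoc, ← zpow_add₀ (by norm_num : (2:ℝ) ≠ 0)]
    norm_num
    ring
lemma two_zpow_pos (k : ℤ) : (0:ℝ) < (2:ℝ)^k := by positivity

lemma zpow_mul_re (n : ℤ) (z : ℂ) : ((2:ℂ)^n * z).re = (2:ℝ)^n * z.re := by
  rw [two_zpow_c, Complex.re_ofReal_mul]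

lemma zpow_mul_im (n : ℤ) (z : ℂ) : ((2:ℂ)^n * z).im = (2:ℝ)^n * z.im := by
  rw [two_zpow_c, Complex.im_ofReal_mul]

lemma two_zpow_cancel (k : ℤ) (a : ℝ) : (2:ℝ)^k * ((2:ℝ)^(-k) * a) = a := by
  rw [← mul_assoc, ← zpow_add₀ (by norm_num : (2:ℝ) ≠ 0)]; simp

lemma mem_W_iff (k : ℕ) (z : ℂ) :
    z ∈ W k ↔ |(2:ℝ)^(k:ℤ) * z.re| + |(2:ℝ)^(k:ℤ) * z.im - 3/4| < 1/4 := by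
  constructor
  · rintro ⟨z0, hz0, rfl⟩
    rw [zpow_mul_re, zpow_mul_im, two_zpow_cancel, two_zpow_cancel]
    exact hz0
  · intro h
    refine ⟨(2:ℂ)^((k:ℤ)) * z, ?_, ?_⟩
    · show |((2:ℂ)^((k:ℤ)) * z).re| + |((2:ℂ)^((k:ℤ)) * z).im - 3/4| < 1/4
      rw [zpow_mul_re, zpow_mul_im]; exact h
    · show (2:ℂ)^(-(k:ℤ)) * ((2:ℂ)^((k:ℤ)) * z) = z
      rw [← mul_assoc, ← zpow_add₀ (by norm_num : (2:ℂ) ≠ 0)]; simp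

lemma frontier_W (k : ℕ) (z : ℂ) (hz : z ∈ frontier (W k)) :
    |(2:ℝ)^(k:ℤ) * z.re| + |(2:ℝ)^(k:ℤ) * z.im - 3/4| = 1/4 := by
  have hW : W k = {z : ℂ | |(2:ℝ)^(k:ℤ) * z.re| + |(2:ℝ)^(k:ℤ) * z.im - 3/4| < 1/4} := by
    ext z; exact mem_W_iff k z
  have hc : Continuous fun z : ℂ => |(2:ℝ)^(k:ℤ) * z.re| + |(2:ℝ)^(k:ℤ) * z.im - 3/4| := by
    fun_prop
  rw [hW] at hz
  exact frontier_lt_subset_eq hc continuous_const hz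
lemma g_of_le_one {δ : ℝ} {d : ℕ} {z : ℂ} (h : ‖z‖ ≤ 1) : g δ d z = z := if_pos h

lemma zpow_half (k : ℤ) : (2:ℝ)^(-(k+1)) = (2:ℝ)^(-k) / 2 := by
  rw [neg_add, zpow_add₀ (by norm_num : (2:ℝ) ≠ 0)]; norm_num; ring

lemma one_le_two_zpow (k : ℕ) : (1:ℝ) ≤ (2:ℝ)^(k:ℤ) := by
  rw [zpow_natCast]; exact one_le_pow₀ (by norm_num)

lemma p_on_W (δ : ℝ) (d : ℕ) (k : ℕ) (z : ℂ) (hz : z ∈ W k) :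
    p δ d z = (1/2 : ℂ) * z ∧ (1/2:ℂ) * z ∈ W (k + 1) := by
  rw [mem_W_iff] at hz
  set P := (2:ℝ)^(k:ℤ) with hP
  have hPpos : 0 < P := two_zpow_pos _
  have hP1 : 1 ≤ P := one_le_two_zpow k
  set x := P * z.re with hx
  set y := P * z.im with hyd
  have hy1 : 1/2 < y := by
    rcases abs_cases (y - 3/4) with ⟨he, _⟩ | ⟨he, _⟩ <;>
      nlinarith [abs_nonneg x, abs_nonneg (y - 3/4)]
  have hy2 : y < 1 := by
    rcases abs_cases (y - 3/4) with ⟨he, _⟩ | ⟨he, _⟩ <;> nlinarith [abs_nonneg x]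
  have hPinv : (2:ℝ)^(-(k:ℤ)) = P⁻¹ := by rw [zpow_neg, hP]
  have him : z.im = P⁻¹ * y := by
    rw [hyd, ← mul_assoc, inv_mul_cancel₀ hPpos.ne', one_mul]
  have hzim1 : (2:ℝ)^(-((k:ℤ)+1)) < z.im := by
    rw [zpow_half, hPinv, him]
    rw [div_lt_iff₀ (by norm_num : (0:ℝ) < 2)]
    nlinarith [inv_pos.mpr hPpos]
  have hzim2 : z.im ≤ (2:ℝ)^(-(k:ℤ)) := by
    rw [hPinv, him]
    nlinarith [inv_pos.mpr hPpos]
  have hf := f_eq z k hzim1 hzim2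
  rw [← hP, ← hx, ← hyd, hy_of_mem hz, one_mul] at hf
  have hfz : f z = (1/2:ℂ) * z := by
    rw [hf]
    apply Complex.ext
    · show (2:ℝ)^(-((k:ℤ)+1)) * x = ((1/2:ℂ) * z).re
      rw [zpow_half, hPinv, hx]
      have : ((1/2:ℂ) * z).re = (1/2:ℝ) * z.re := by
        rw [show ((1/2:ℂ)) = (((1/2:ℝ)):ℂ) by norm_num, Complex.re_ofReal_mul]
      rw [this]; field_simp
    · show z.im/2 = ((1/2:ℂ) * z).im
      rw [show ((1/2:ℂ)) = (((1/2:ℝ)):ℂ) by norm_num, Complex.im_ofReal_mul]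
      ring
  have hrebd : |z.re| < 1/4 := by
    have : |x| < 1/4 := by nlinarith [abs_nonneg (y - 3/4)]
    rw [hx, abs_mul, abs_of_pos hPpos] at this
    nlinarith [abs_nonneg z.re]
  have himbd : |z.im| ≤ 1 := by
    rw [abs_of_pos (by nlinarith [inv_pos.mpr hPpos] : 0 < z.im)]
    nlinarith [inv_pos.mpr hPpos, him]
  have habs : ‖(1/2:ℂ) * z‖ ≤ 1 := by
    rw [norm_mul]
    have h1 : ‖(1/2:ℂ)‖ = 1/2 := by
      norm_num
    have h2 : ‖z‖ ≤ |z.re| + |z.im| := Complex.norm_le_abs_re_add_abs_im z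
    rw [h1]; nlinarith [norm_nonneg z]
  constructor
  · show g δ d (f z) = _
    rw [hfz, g_of_le_one habs]
  · rw [mem_W_iff]
    have hre2 : ((1/2:ℂ) * z).re = (1/2:ℝ) * z.re := by
      rw [show ((1/2:ℂ)) = (((1/2:ℝ)):ℂ) by norm_num, Complex.re_ofReal_mul]
    have him2 : ((1/2:ℂ) * z).im = (1/2:ℝ) * z.im := by
      rw [show ((1/2:ℂ)) = (((1/2:ℝ)):ℂ) by norm_num, Complex.im_ofReal_mul]
    rw [hre2, him2]
    have hPk : (2:ℝ)^((k:ℤ)+1) = 2 * P := by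
      rw [zpow_add₀ (by norm_num : (2:ℝ) ≠ 0)]; ring
    have e1 : (2:ℝ)^(((k+1:ℕ)):ℤ) = 2 * P := by rw [← hPk]; push_cast; ring_nf
    rw [e1]
    have : 2 * P * ((1/2:ℝ) * z.re) = x := by rw [hx]; ring
    rw [this]
    have : 2 * P * ((1/2:ℝ) * z.im) = y := by rw [hyd]; ring
    rw [this]
    exact hz
lemma not_escaping_of_mem_W (δ : ℝ) (d : ℕ) (j : ℕ) (z : ℂ) (hz : z ∈ W j) :
    z ∉ escapingSet (p δ d) := by
  have key : ∀ n : ℕ, (p δ d)^[n] z ∈ W (j + n) ∧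
      ‖(p δ d)^[n] z‖ ≤ ‖z‖ := by
    intro n
    induction n with
    | zero => simpa using hz
    | succ n ih =>
      obtain ⟨h1, h2⟩ := ih
      obtain ⟨hstep, hmem⟩ := p_on_W δ d (j + n) _ h1
      rw [Function.iterate_succ_apply', hstep]
      constructor
      · exact hmem
      · rw [norm_mul]
        have : ‖(1/2:ℂ)‖ = 1/2 := by norm_num
        rw [this]
        nlinarith [norm_nonneg ((p δ d)^[n] z)]
  intro hesc
  have := hesc.eventually_ge_atTop (‖z‖ + 1)
  obtain ⟨n, hn⟩ := this.exists
  have := (key n).2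
  linarith
set_option maxHeartbeats 2000000 in
lemma escapes (δ : ℝ) (d : ℕ) (ε : ℝ) (hε1 : 0 < ε) (hε2 : ε < 1/4)
    (hI : I1 ε ∪ I2 ε ⊆ escapingSet (p δ d))
    (z : ℂ) (m : ℤ)
    (hre : 0 < z.re) (hre2 : z.re < 1/8)
    (him1 : (2:ℝ)^(-(m+1)) < z.im) (him2 : z.im ≤ (2:ℝ)^(-m)) (himε : z.im ≤ ε)
    (hout : 1/4 < (2:ℝ)^m * z.re + |(2:ℝ)^m * z.im - 3/4|) :
    z ∈ escapingSet (p δ d) := by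
  have h2ne : (2:ℝ) ≠ 0 := by norm_num
  have him0 : 0 < z.im := lt_trans (by positivity) him1
  set y := (2:ℝ)^m * z.im with hyd
  have hy1 : 1/2 < y := by
    have h : (2:ℝ)^m * (2:ℝ)^(-(m+1)) = 1/2 := by
      rw [← zpow_add₀ h2ne]; norm_num
    calc (1:ℝ)/2 = (2:ℝ)^m * (2:ℝ)^(-(m+1)) := h.symm
    _ < y := by rw [hyd]; exact (mul_lt_mul_iff_right₀ (two_zpow_pos m)).mpr him1
  have hy2 : y ≤ 1 := by
    have h : (2:ℝ)^m * (2:ℝ)^(-m) = 1 := by rw [← zpow_add₀ h2ne]; norm_num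
    calc y ≤ (2:ℝ)^m * (2:ℝ)^(-m) := by
          rw [hyd]; exact (mul_le_mul_iff_right₀ (two_zpow_pos m)).mpr him2
    _ = 1 := h
  set x0 := (2:ℝ)^m * z.re with hx0
  have hx0pos : 0 < x0 := mul_pos (two_zpow_pos m) hre
  set x : ℕ → ℝ := fun n => (fun t => hy y t * t)^[n] x0 with hxdef
  have hxsucc : ∀ n, x (n+1) = hy y (x n) * x n := by
    intro n; show (fun t => hy y t * t)^[n+1] x0 = _; rw [Function.iterate_succ_apply']
  have hx00 : x 0 = x0 := rfl
  have hout' : 1/4 < x0 + |y - 3/4| := hout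
  -- invariant
  have inv : ∀ n, (0 < x n ∧ 1/4 < x n + |y - 3/4|) ∧ x0 ≤ x n := by
    intro n
    induction n with
    | zero => rw [hx00]; exact ⟨⟨hx0pos, hout'⟩, le_refl _⟩
    | succ n ih =>
      obtain ⟨⟨hp, ho⟩, hmon⟩ := ih
      have h1 : 1 ≤ hy y (x n) := hy_ge_one hy1 hy2 hp ho
      have hge : x n ≤ x (n+1) := by
        rw [hxsucc]; nlinarith
      exact ⟨⟨by rw [hxsucc]; nlinarith, by linarith⟩, le_trans hmon hge⟩
  -- Phase 1 : some iterate exceeds y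
  have phase1 : ∃ n, y ≤ x n := by
    by_contra hcon
    push_neg at hcon
    set xb := 1/4 - |y - 3/4| with hxb
    have hgap0 : 0 < x0 - xb := by rw [hxb]; linarith
    have G : ∀ n, (x0 - xb) * (1 + 3*x0)^n ≤ x n - xb := by
      intro n
      induction n with
      | zero => rw [hx00]; simp
      | succ n ih =>
        obtain ⟨⟨hp, ho⟩, hmon⟩ := inv n
        have hgap := hy_gap hy1 hy2 hp ho (hcon n)
        have h1 : (x0 - xb) * (1 + 3*x0)^(n+1) = ((x0 - xb) * (1 + 3*x0)^n) * (1 + 3*x0) := by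
          ring
        rw [h1, hxsucc]
        calc ((x0 - xb) * (1 + 3*x0)^n) * (1 + 3*x0) ≤ (x n - xb) * (1 + 3*x0) := by
              apply mul_le_mul_of_nonneg_right ih; nlinarith
        _ ≤ (x n - xb) * (1 + 3*(x n)) := by
              apply mul_le_mul_of_nonneg_left (by nlinarith) (by rw [hxb]; nlinarith [(inv n).1.2])
        _ ≤ hy y (x n) * x n - xb := hy_gap hy1 hy2 hp ho (hcon n)
    obtain ⟨n, hn⟩ := pow_unbounded_of_one_lt ((1 - xb)/(x0 - xb)) (show (1:ℝ) < 1 + 3*x0 by linarith)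
    have h2 : (1 - xb) < (x0 - xb) * (1 + 3*x0)^n := by
      rw [div_lt_iff₀ hgap0] at hn; nlinarith [hn]
    have h3 := G n
    have h4 : x n < y := hcon n
    linarith
  -- Phase 2
  obtain ⟨N1, hN1⟩ := phase1
  have phase2 : ∀ k, y ≤ x (N1 + k) ∧ x (N1 + k) = 4^k * x N1 := by
    intro k
    induction k with
    | zero => simpa using hN1
    | succ k ih =>
      obtain ⟨h1, h2⟩ := ih
      have hp : 0 < x (N1 + k) := (inv (N1+k)).1.1
      have h4 : hy y (x (N1+k)) = 4 := hy_of_ge hy1 h1 hp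
      have hs : x (N1 + (k+1)) = 4 * x (N1 + k) := by
        rw [show N1 + (k+1) = (N1+k)+1 by ring, hxsucc, h4]
      constructor
      · rw [hs]; nlinarith
      · rw [hs, h2]; ring
  -- actual real part sequence
  set R : ℕ → ℝ := fun n => (2:ℝ)^(-(m+(n:ℤ))) * x n with hRdef
  have hRpos : ∀ n, 0 < R n := fun n => mul_pos (two_zpow_pos _) (inv n).1.1
  have hR0 : R 0 = z.re := by
    show (2:ℝ)^(-(m+(0:ℤ))) * x 0 = z.re
    rw [hx00, hx0, show -(m+(0:ℤ)) = -m by ring, zpow_neg, ← mul_assoc,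
      inv_mul_cancel₀ (by positivity : ((2:ℝ)^m) ≠ 0), one_mul]
  have hQsucc : ∀ n : ℕ, (2:ℝ)^(-(m+((n:ℤ)+1))) = (2:ℝ)^(-(m+(n:ℤ))) / 2 := by
    intro n
    rw [show -(m+((n:ℤ)+1)) = -(m+(n:ℤ)) + (-1) by ring, zpow_add₀ h2ne]
    norm_num
    ring
  have hRsucc : ∀ n, R (n+1) = (2:ℝ)^(-(m+(n:ℤ))) / 2 * (hy y (x n) * x n) := by
    intro n
    show (2:ℝ)^(-(m+((n+1:ℕ):ℤ))) * x (n+1) = _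
    rw [hxsucc n, show ((n+1:ℕ):ℤ) = (n:ℤ)+1 by push_cast; ring, hQsucc n]
  have hRdouble : ∀ k, R (N1 + k) = 2^k * R N1 := by
    intro k
    have h2 := (phase2 k).2
    show (2:ℝ)^(-(m+((N1+k:ℕ):ℤ))) * x (N1+k) = _
    rw [h2]
    have : (2:ℝ)^(-(m+((N1+k:ℕ):ℤ))) = (2:ℝ)^(-(m+(N1:ℤ))) * (2:ℝ)^(-(k:ℤ)) := by
      rw [← zpow_add₀ h2ne]; push_cast; ring_nf
    rw [this]
    have h4 : (4:ℝ)^k = 2^k * 2^k := by rw [show (4:ℝ) = 2*2 by norm_num, mul_pow]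
    have h2k : (2:ℝ)^(-(k:ℤ)) * 2^k = 1 := by
      rw [zpow_neg, zpow_natCast]
      field_simp
    show (2:ℝ)^(-(m+(N1:ℤ))) * (2:ℝ)^(-(k:ℤ)) * ((4:ℝ)^k * x N1) = (2:ℝ)^k * ((2:ℝ)^(-(m+(N1:ℤ))) * x N1)
    rw [h4]
    linear_combination ((2:ℝ)^(-(m+(N1:ℤ))) * 2^k * x N1) * h2k
  -- there is an iterate with R n ≥ 1/4
  have hexist : ∃ n, 1/4 ≤ R n := by
    obtain ⟨k, hk⟩ := pow_unbounded_of_one_lt ((1/4) / R N1) (show (1:ℝ) < 2 by norm_num)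
    refine ⟨N1 + k, ?_⟩
    rw [hRdouble k]
    rw [div_lt_iff₀ (hRpos N1)] at hk
    linarith
  -- least N with R N ≥ 1/4
  have hNex : ∃ n, 1/4 ≤ R n := hexist
  set N := Nat.find hNex with hNdef
  have hN : 1/4 ≤ R N := Nat.find_spec hNex
  have hltN : ∀ i, i < N → R i < 1/4 := by
    intro i hi
    have := Nat.find_min hNex hi
    linarith [lt_of_not_ge this]
  have hNne : N ≠ 0 := by
    intro h0
    rw [h0, hR0] at hN
    linarith
  obtain ⟨N', hN'⟩ : ∃ N', N = N' + 1 := ⟨N - 1, by omega⟩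
  have hRNle : R N ≤ 1/2 := by
    have hb := hltN N' (by omega)
    have h4 : hy y (x N') ≤ 4 := hy_le_four (inv N').1.1.le
    have : R (N'+1) ≤ 2 * R N' := by
      rw [hRsucc N']
      show (2:ℝ)^(-(m+(N':ℤ))) / 2 * (hy y (x N') * x N') ≤ 2 * ((2:ℝ)^(-(m+(N':ℤ))) * x N')
      have hq := two_zpow_pos (-(m+(N':ℤ)))
      nlinarith [(inv N').1.1, mul_nonneg (mul_nonneg hq.le (inv N').1.1.le) (sub_nonneg.mpr h4)]
    rw [hN']
    linarith
  have hRle : ∀ k, k ≤ N → R k ≤ 1/2 := by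
    intro k hk
    rcases lt_or_eq_of_le hk with h | h
    · linarith [hltN k h]
    · rw [h]; exact hRNle
  -- orbit identification
  have horb : ∀ n, f^[n] z = ⟨R n, (2:ℝ)^(-(m+(n:ℤ))) * y⟩ := by
    intro n
    induction n with
    | zero =>
      show z = _
      apply Complex.ext
      · rw [hR0]
      · show z.im = (2:ℝ)^(-(m+(0:ℤ))) * y
        rw [hyd, show -(m+(0:ℤ)) = -m by ring, zpow_neg, ← mul_assoc,
          inv_mul_cancel₀ (by positivity : ((2:ℝ)^m) ≠ 0), one_mul]
    | succ n ih =>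
      rw [Function.iterate_succ_apply', ih]
      set Zn : ℂ := ⟨R n, (2:ℝ)^(-(m+(n:ℤ))) * y⟩ with hZn
      have hQp := two_zpow_pos (-(m+(n:ℤ)))
      have hcanc : (2:ℝ)^(m+(n:ℤ)) * ((2:ℝ)^(-(m+(n:ℤ))) * y) = y := two_zpow_cancel _ _
      have hcanc2 : (2:ℝ)^(m+(n:ℤ)) * ((2:ℝ)^(-(m+(n:ℤ))) * x n) = x n := two_zpow_cancel _ _
      have hzim1' : (2:ℝ)^(-((m+(n:ℤ))+1)) < Zn.im := by
        show (2:ℝ)^(-((m+(n:ℤ))+1)) < (2:ℝ)^(-(m+(n:ℤ))) * y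
        rw [show -((m+(n:ℤ))+1) = -(m+(n:ℤ)) + (-1) by ring, zpow_add₀ h2ne]
        have : (2:ℝ)^(-1:ℤ) = 1/2 := by norm_num
        rw [this]
        nlinarith
      have hzim2' : Zn.im ≤ (2:ℝ)^(-(m+(n:ℤ))) := by
        show (2:ℝ)^(-(m+(n:ℤ))) * y ≤ _
        nlinarith
      have hfe := f_eq Zn (m+(n:ℤ)) hzim1' hzim2'
      rw [hfe]
      apply Complex.ext
      · show (2:ℝ)^(-((m+(n:ℤ))+1)) * (hy ((2:ℝ)^(m+(n:ℤ)) * Zn.im) ((2:ℝ)^(m+(n:ℤ)) * Zn.re) * ((2:ℝ)^(m+(n:ℤ)) * Zn.re)) = R (n+1)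
        have hre : (2:ℝ)^(m+(n:ℤ)) * Zn.re = x n := hcanc2
        have him' : (2:ℝ)^(m+(n:ℤ)) * Zn.im = y := hcanc
        rw [hre, him', hRsucc n, show -((m+(n:ℤ))+1) = -(m+((n:ℤ)+1)) by ring, hQsucc n]
      · show Zn.im / 2 = (2:ℝ)^(-(m+((n+1:ℕ):ℤ))) * y
        rw [show ((n+1:ℕ):ℤ) = (n:ℤ)+1 by push_cast; ring, hQsucc n]
        show ((2:ℝ)^(-(m+(n:ℤ))) * y) / 2 = _
        ring
  -- im bounds of orbit
  have himorb : ∀ n : ℕ, 0 < (2:ℝ)^(-(m+(n:ℤ))) * y ∧ (2:ℝ)^(-(m+(n:ℤ))) * y ≤ ε := by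
    intro n
    constructor
    · positivity
    · have h1 : (2:ℝ)^(-(m+(n:ℤ))) ≤ (2:ℝ)^(-m) := by
        apply zpow_le_zpow_right₀ (by norm_num : (1:ℝ) ≤ 2)
        omega
      have h2 : (2:ℝ)^(-m) * y = z.im := by
        rw [hyd, ← mul_assoc, ← zpow_add₀ h2ne]
        norm_num
      nlinarith [two_zpow_pos (-m), hy1]
  -- p iterates agree with f iterates up to N
  have hpf : ∀ n, n ≤ N → (p δ d)^[n] z = f^[n] z := by
    intro n hn
    induction n with
    | zero => rfl
    | succ n ih =>
      have hn' : n ≤ N := by omega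
      rw [Function.iterate_succ_apply', Function.iterate_succ_apply', ih hn']
      show g δ d (f (f^[n] z)) = f (f^[n] z)
      apply g_of_le_one
      have : f (f^[n] z) = f^[n+1] z := (Function.iterate_succ_apply' f n z).symm
      rw [this, horb (n+1)]
      have habs := Complex.norm_le_abs_re_add_abs_im (⟨R (n+1), (2:ℝ)^(-(m+((n+1:ℕ):ℤ))) * y⟩ : ℂ)
      have h1 : |(R (n+1))| ≤ 1/2 := by
        rw [abs_of_pos (hRpos (n+1))]
        exact hRle (n+1) hn
      have h2 := himorb (n+1)
      have h3 : |(2:ℝ)^(-(m+((n+1:ℕ):ℤ))) * y| ≤ ε := by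
        rw [abs_of_pos h2.1]; exact h2.2
      calc ‖_‖ ≤ _ := habs
      _ ≤ 1/2 + ε := by
          show |(⟨R (n+1), (2:ℝ)^(-(m+((n+1:ℕ):ℤ))) * y⟩ : ℂ).re| + |(⟨R (n+1), (2:ℝ)^(-(m+((n+1:ℕ):ℤ))) * y⟩ : ℂ).im| ≤ 1/2 + ε
          show |(R (n+1))| + |(2:ℝ)^(-(m+((n+1:ℕ):ℤ))) * y| ≤ 1/2 + ε
          linarith
      _ ≤ 1 := by linarith
  -- p^[N] z lands in I1
  have hland : (p δ d)^[N] z ∈ I1 ε := by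
    rw [hpf N (le_refl N), horb N]
    refine ⟨hN, ?_, (himorb N).1.le, (himorb N).2⟩
    show R N ≤ 1
    linarith [hRNle]
  have hesc : (p δ d)^[N] z ∈ escapingSet (p δ d) := hI (Or.inl hland)
  -- conclude
  show Tendsto (fun n : ℕ => ‖(p δ d)^[n] z‖) atTop atTop
  rw [← tendsto_add_atTop_iff_nat N]
  have : (fun n : ℕ => ‖(p δ d)^[n + N] z‖)
      = fun n : ℕ => ‖(p δ d)^[n] ((p δ d)^[N] z)‖ := by
    funext n
    rw [Function.iterate_add_apply]
  rw [this]
  exact hesc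
set_option maxHeartbeats 1000000 in
theorem stmt17 (δ : ℝ) (hδ : 0 < δ) (d : ℕ) (hd : Odd d)
    (ε : ℝ) (hε : ε ∈ Ioo (0 : ℝ) (1/4)) (j : ℕ) (hj : (2:ℝ) ^ (-(j:ℤ)) ≤ ε)
    (hI : I1 ε ∪ I2 ε ⊆ escapingSet (p δ d))
    (w : ℂ) (hw : w ∈ frontier (W j)) (hwre : 0 ≤ w.re) :
    (∃ η₀ > 0, ∀ η : ℝ, 0 < η → η < η₀ → w + η ∈ escapingSet (p δ d)) ∧
    w ∈ frontier (escapingSet (p δ d)) := by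
  obtain ⟨hε1, hε2⟩ := hε
  have h2ne : (2:ℝ) ≠ 0 := by norm_num
  have hbd := frontier_W j w hw
  set P := (2:ℝ)^(j:ℤ) with hP
  have hPpos : 0 < P := two_zpow_pos _
  have hP1 : 1 ≤ P := one_le_two_zpow j
  have hPinv : (2:ℝ)^(-(j:ℤ)) = P⁻¹ := by rw [zpow_neg, hP]
  rw [_root_.abs_of_nonneg (mul_nonneg hPpos.le hwre)] at hbd
  have habs : |P * w.im - 3/4| ≤ 1/4 := by
    nlinarith [mul_nonneg hPpos.le hwre]
  have him_lb : 1/2 ≤ P * w.im := by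
    rcases abs_cases (P * w.im - 3/4) with ⟨he, _⟩ | ⟨he, _⟩ <;> nlinarith
  have him_ub : P * w.im ≤ 1 := by
    rcases abs_cases (P * w.im - 3/4) with ⟨he, _⟩ | ⟨he, _⟩ <;> nlinarith
  have hwre_ub : w.re < 1/16 := by
    have h1 : P * w.re ≤ 1/4 := by nlinarith [abs_nonneg (P * w.im - 3/4)]
    have h2 : w.re ≤ 1/4 * P⁻¹ := by
      have h := mul_le_mul_of_nonneg_left h1 (inv_pos.mpr hPpos).le
      rw [← mul_assoc, inv_mul_cancel₀ hPpos.ne', one_mul] at h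
      linarith
    have h3 : P⁻¹ ≤ ε := by rw [← hPinv]; exact hj
    nlinarith [inv_pos.mpr hPpos]
  have hwim_pos : 0 < w.im := by nlinarith
  have hwim_eps : w.im ≤ ε := by
    have h1 : w.im ≤ P⁻¹ := by
      have h := mul_le_mul_of_nonneg_left him_ub (inv_pos.mpr hPpos).le
      rw [← mul_assoc, inv_mul_cancel₀ hPpos.ne', one_mul] at h
      linarith
    have h3 : P⁻¹ ≤ ε := by rw [← hPinv]; exact hj
    linarith
  have hmain : ∀ η : ℝ, 0 < η → η < 1/16 → w + η ∈ escapingSet (p δ d) := by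
    intro η hη1 hη2
    have hzre : (w + (η:ℂ)).re = w.re + η := by simp
    have hzim : (w + (η:ℂ)).im = w.im := by simp
    by_cases hc : 1/2 < P * w.im
    · apply escapes δ d ε hε1 hε2 hI _ (j:ℤ)
      · rw [hzre]; linarith
      · rw [hzre]; linarith
      · rw [hzim]
        rw [show -((j:ℤ)+1) = -(j:ℤ) + (-1) by ring, zpow_add₀ h2ne, hPinv]
        have : (2:ℝ)^(-1:ℤ) = 1/2 := by norm_num
        rw [this]
        have h5 := mul_lt_mul_of_pos_left hc (inv_pos.mpr hPpos)
        rw [← mul_assoc, inv_mul_cancel₀ hPpos.ne', one_mul] at h5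
        nlinarith [inv_pos.mpr hPpos]
      · rw [hzim, hPinv]
        have h5 := mul_le_mul_of_nonneg_left him_ub (inv_pos.mpr hPpos).le
        rw [← mul_assoc, inv_mul_cancel₀ hPpos.ne', one_mul] at h5
        linarith
      · rw [hzim]; exact hwim_eps
      · rw [hzre, hzim, ← hP]
        have : P * (w.re + η) = P * w.re + P * η := by ring
        rw [this]
        nlinarith [mul_pos hPpos hη1]
    · have hceq : P * w.im = 1/2 := le_antisymm (not_lt.mp hc) him_lb
      have hre0 : w.re = 0 := by
        rw [hceq] at hbd
        have : |(1:ℝ)/2 - 3/4| = 1/4 := by norm_num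
        rw [this] at hbd
        nlinarith
      apply escapes δ d ε hε1 hε2 hI _ ((j:ℤ)+1)
      · rw [hzre, hre0]; linarith
      · rw [hzre, hre0]; linarith
      · rw [hzim]
        have hwim : w.im = P⁻¹ * (1/2) := by
          rw [← hceq, ← mul_assoc, inv_mul_cancel₀ hPpos.ne', one_mul]
        rw [hwim, show -(((j:ℤ)+1)+1) = -(j:ℤ) + (-2) by ring, zpow_add₀ h2ne, hPinv]
        have : (2:ℝ)^(-2:ℤ) = 1/4 := by norm_num
        rw [this]
        nlinarith [inv_pos.mpr hPpos]
      · rw [hzim]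
        have hwim : w.im = P⁻¹ * (1/2) := by
          rw [← hceq, ← mul_assoc, inv_mul_cancel₀ hPpos.ne', one_mul]
        rw [hwim, show -((j:ℤ)+1) = -(j:ℤ) + (-1) by ring, zpow_add₀ h2ne, hPinv]
        norm_num
      · rw [hzim]; exact hwim_eps
      · rw [hzre, hzim, hre0]
        have hq : (2:ℝ)^((j:ℤ)+1) = 2 * P := by
          rw [zpow_add₀ h2ne, hP]; ring
        rw [hq]
        have h1 : 2 * P * w.im = 1 := by nlinarith [hceq]
        rw [show 2 * P * (0 + η) = 2 * P * η by ring, h1]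
        have : |(1:ℝ) - 3/4| = 1/4 := by norm_num
        rw [this]
        nlinarith [mul_pos hPpos hη1]
  refine ⟨⟨1/16, by norm_num, hmain⟩, ?_⟩
  rw [frontier, Set.mem_diff]
  constructor
  · rw [Metric.mem_closure_iff]
    intro r hr
    set η := min (1/32) (r/2) with hη
    have hη1 : 0 < η := by positivity
    have hη2 : η < 1/16 := by
      calc η ≤ 1/32 := min_le_left _ _
      _ < 1/16 := by norm_num
    refine ⟨w + η, hmain η hη1 hη2, ?_⟩
    rw [Complex.dist_eq]
    have : w - (w + (η:ℂ)) = -(η:ℂ) := by ring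
    rw [this, norm_neg, Complex.norm_real, Real.norm_eq_abs, abs_of_pos hη1]
    calc η ≤ r/2 := min_le_right _ _
    _ < r := by linarith
  · intro hin
    have hcl : w ∈ closure (W j) := frontier_subset_closure hw
    rw [mem_closure_iff] at hcl
    obtain ⟨v, hv1, hv2⟩ := hcl (interior (escapingSet (p δ d))) isOpen_interior hin
    exact not_escaping_of_mem_W δ d j v hv2 (interior_subset hv1)
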